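/- Let n ≥ 1 and let R be a quartic form on C^n with Hermitian symmetry R_{ij̄kl̄} = conj(R_{jīlk̄}), satisfying the symmetrized identity α(R_{ij̄} g_{kl̄} + R_{kj̄} g_{il̄} + R_{il̄} g_{kj̄} + R_{kl̄} g_{ij̄}) + β(R_{ij̄kl̄} + R_{kj̄il̄} + R_{il̄kj̄} + R_{kl̄ij̄}) = 2c(g_{ij̄} g_{kl̄} + g_{il̄} g_{kj̄}) for all i,j,k,l, where Ric⁽¹⁾_{ij̄} = Σₖ R_{ij̄kk̄}, Ric⁽²⁾_{kl̄} = Σᵢ R_{iīkl̄}, Ric⁽³⁾_{il̄} = Σₖ R_{ik̄kl̄}, Ric⁽⁴⁾_{kj̄} = Σᵢ R_{ij̄kī}, and u = trace of Ric⁽¹⁾. Then (α(n+2)+β)·Ric⁽¹⁾ + β·Ric⁽²⁾ + β·(Ric⁽³⁾ + Ric⁽⁴⁾) = (2(n+1)c − αu)·g as Hermitian matrices. -/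
import Mathlib


open BigOperators Finset

noncomputable section

namespace Stmt4

/-- First Chern Ricci contraction: `Ric⁽¹⁾_{ij̄} = ∑ₖ R_{ij̄kk̄}`. -/
def ric₁ {n : ℕ} (R : Fin n → Fin n → Fin n → Fin n → ℂ) (i j : Fin n) : ℂ :=
  ∑ k, R i j k k

/-- Second Chern Ricci contraction: `Ric⁽²⁾_{kl̄} = ∑ᵢ R_{iīkl̄}`. -/
def ric₂ {n : ℕ} (R : Fin n → Fin n → Fin n → Fin n → ℂ) (k l : Fin n) : ℂ :=
  ∑ i, R i i k l

/-- Third Chern Ricci contraction: `Ric⁽³⁾_{il̄} = ∑ₖ R_{ik̄kl̄}`. -/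
def ric₃ {n : ℕ} (R : Fin n → Fin n → Fin n → Fin n → ℂ) (i l : Fin n) : ℂ :=
  ∑ k, R i k k l

/-- Fourth Chern Ricci contraction: `Ric⁽⁴⁾_{kj̄} = ∑ᵢ R_{ij̄kī}`. -/
def ric₄ {n : ℕ} (R : Fin n → Fin n → Fin n → Fin n → ℂ) (k j : Fin n) : ℂ :=
  ∑ i, R i j k i

/-- Chern scalar curvature: the trace of `Ric⁽¹⁾`. -/
def scal {n : ℕ} (R : Fin n → Fin n → Fin n → Fin n → ℂ) : ℂ :=
  ∑ i, ric₁ R i i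

/-- The standard Hermitian inner product `g_{ij̄} = δ_{ij}`. -/
def g {n : ℕ} (i j : Fin n) : ℂ := if i = j then 1 else 0

/-- Equation (3.11) of Lemma 3.1: taking the trace of the symmetrized mixed-curvature
constancy identity yields
`(α(n+2)+β)Ric⁽¹⁾ + βRic⁽²⁾ + β(Ric⁽³⁾+Ric⁽⁴⁾) = (2(n+1)c − αu)g`. -/
theorem trace_of_symmetrized_identity
    (n : ℕ) (hn : 1 ≤ n)
    (R : Fin n → Fin n → Fin n → Fin n → ℂ)
    (hherm : ∀ i j k l, R i j k l = (starRingEnd ℂ) (R j i l k))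
    (α β c : ℝ)
    (hsym : ∀ i j k l : Fin n,
      (α : ℂ) * (ric₁ R i j * g k l + ric₁ R k j * g i l
          + ric₁ R i l * g k j + ric₁ R k l * g i j)
        + (β : ℂ) * (R i j k l + R k j i l + R i l k j + R k l i j)
      = 2 * (c : ℂ) * (g i j * g k l + g i l * g k j)) :
    ∀ a b : Fin n,
      ((α * (n + 2) + β : ℝ) : ℂ) * ric₁ R a b + (β : ℂ) * ric₂ R a b
          + (β : ℂ) * (ric₃ R a b + ric₄ R a b)
        = (((2 * (n + 1) * c : ℝ) : ℂ) - (α : ℂ) * scal R) * g a b := by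
  intro a b
  have key : (∑ k : Fin n, ((α : ℂ) * (ric₁ R a b * g k k + ric₁ R k b * g a k
          + ric₁ R a k * g k b + ric₁ R k k * g a b)
        + (β : ℂ) * (R a b k k + R k b a k + R a k k b + R k k a b)))
      = ∑ k : Fin n, 2 * (c : ℂ) * (g a b * g k k + g a k * g k b) :=
    Finset.sum_congr rfl fun k _ => hsym a b k k
  have hg : ∑ k : Fin n, g k k = (n : ℂ) := by simp [g]
  have h2 : ∑ k : Fin n, ric₁ R k b * g a k = ric₁ R a b := by simp [g]
  have h3 : ∑ k : Fin n, ric₁ R a k * g k b = ric₁ R a b := by simp [g]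
  have h4 : ∑ k : Fin n, g a k * g k b = g a b := by
    simp [g, ite_and, Finset.sum_ite_eq]
  simp only [Finset.sum_add_distrib, ← Finset.mul_sum, Finset.sum_mul, hg, h2, h3, h4] at key
  have e1 : ∑ k : Fin n, R a b k k = ric₁ R a b := rfl
  have e2 : ∑ k : Fin n, R k b a k = ric₄ R a b := rfl
  have e3 : ∑ k : Fin n, R a k k b = ric₃ R a b := rfl
  have e4 : ∑ k : Fin n, R k k a b = ric₂ R a b := rfl
  have e5 : ∑ k : Fin n, ric₁ R k k * g a b = scal R * g a b := by
    rw [← Finset.sum_mul]; rfl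
  rw [e2, e3, e4, e5] at key
  push_cast
  linear_combination key - (β : ℂ) * e1


end Stmt4
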